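/- Let G be a group and H a subgroup of G of infinite index. Then H is not an IP*-set in G: there exists a sequence {x_n}_{n=1}^∞ in G such that no finite product x_{t(1)} x_{t(2)} ⋯ x_{t(m)} with t(1) < t(2) < ... < t(m) lies in H. -/

import Mathlib

section Aux

variable {G : Type*} [Group G]

lemma aux_key (H : Subgroup G) (hind : H.index = 0) (l : List G) :
    ∃ y : G, ∀ p ∈ l.sublists, p.prod * y ∉ H := by
  have hinf : Infinite (G ⧸ H) := Subgroup.index_eq_zero_iff_infinite.mp hind
  classical
  obtain ⟨q, hq⟩ := ((l.sublists.map (fun p => ((p.prod⁻¹ : G) : G ⧸ H))).toFinset).exists_notMem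
  obtain ⟨y, rfl⟩ := QuotientGroup.mk_surjective q
  refine ⟨y, fun p hp hmem => hq ?_⟩
  rw [List.mem_toFinset, List.mem_map]
  refine ⟨p, hp, ?_⟩
  rw [QuotientGroup.eq]
  simpa using hmem

variable (H : Subgroup G) (hind : H.index = 0)

/-- a choice of element fresh relative to the list `l`. -/
noncomputable def auxNext (l : List G) : G := (aux_key H hind l).choose

lemma auxNext_spec (l : List G) : ∀ p ∈ l.sublists, p.prod * auxNext H hind l ∉ H :=
  (aux_key H hind l).choose_spec

/-- the list of the first `n` chosen elements. -/
noncomputable def auxL : ℕ → List G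
  | 0 => []
  | n + 1 => auxL n ++ [auxNext H hind (auxL n)]

/-- the stream of chosen elements. -/
noncomputable def auxX : Stream' G := fun n => auxNext H hind (auxL H hind n)

lemma auxL_succ (n : ℕ) : auxL H hind (n + 1) = auxL H hind n ++ [auxX H hind n] := rfl

lemma aux_main : ∀ (a : Stream' G) (g : G), g ∈ Hindman.FP a →
    ∀ n, a = (auxX H hind).drop n →
      ∀ p ∈ (auxL H hind n).sublists, p.prod * g ∉ H := by
  intro a g hg
  induction hg with
  | head' a =>
    intro n ha p hp
    subst ha
    rw [Stream'.head_drop]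
    exact auxNext_spec H hind _ p hp
  | tail' a m h ih =>
    intro n ha p hp
    subst ha
    refine ih (n + 1) (by rw [Stream'.tail_drop']) p ?_
    rw [auxL_succ, List.mem_sublists] at *
    exact hp.trans (List.sublist_append_left _ _)
  | cons' a m h ih =>
    intro n ha p hp
    subst ha
    rw [Stream'.head_drop]
    have h2 : (p ++ [auxX H hind n]) ∈ (auxL H hind (n + 1)).sublists := by
      rw [auxL_succ, List.mem_sublists] at *
      exact hp.append (List.Sublist.refl _)
    have := ih (n + 1) (by rw [Stream'.tail_drop']) _ h2
    simpa [mul_assoc, Stream'.get] using this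

end Aux

/-- If `H` is a subgroup of `G` of infinite index, then `H` is not an `IP⋆`-set in `G`:
there is a sequence in `G` none of whose finite products (with increasing indices)
lies in `H`. -/
theorem stmt_2 {G : Type*} [Group G] (H : Subgroup G) (hind : H.index = 0) :
    ∃ x : Stream' G, ∀ g ∈ Hindman.FP x, g ∉ H := by
  refine ⟨auxX H hind, fun g hg hgH => ?_⟩
  have := aux_main H hind _ g hg 0 rfl [] (by simp)
  simp only [List.prod_nil, one_mul] at this
  exact this hgH
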